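/- Let σ be a non-identity permutation of {1,...,n}, and let i, j be misplaced under σ (i.e., (i−j)(σ(i)−σ(j)) < 0). Let σ' be σ with the values σ(i) and σ(j) swapped. Then Σₖ (k − σ'(k))² < Σₖ (k − σ(k))², so each swap of a misplaced pair strictly decreases n·GDM. -/

import Mathlib

/-- Swapping the values `σ(i)` and `σ(j)` of a misplaced pair strictly decreases `n·GDM`. -/
theorem swap_decreases_disorder (n : ℕ) (σ : Equiv.Perm (Fin n))
    (hσ : σ ≠ Equiv.refl (Fin n)) (i j : Fin n)
    (hmis : (((i : ℕ) : ℝ) - ((j : ℕ) : ℝ)) * (((σ i : ℕ) : ℝ) - ((σ j : ℕ) : ℝ)) < 0) :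
    ∑ k : Fin n, (((k : ℕ) : ℝ) - (((σ * Equiv.swap i j) k : ℕ) : ℝ)) ^ 2
      < ∑ k : Fin n, (((k : ℕ) : ℝ) - ((σ k : ℕ) : ℝ)) ^ 2 := by
  have hij : i ≠ j := by
    rintro rfl; simp at hmis
  rw [← Finset.sum_compl_add_sum ({i, j} : Finset (Fin n)),
      ← Finset.sum_compl_add_sum ({i, j} : Finset (Fin n))
        (f := fun k => (((k : ℕ) : ℝ) - ((σ k : ℕ) : ℝ)) ^ 2)]
  have hcompl : ∑ k ∈ ({i, j} : Finset (Fin n))ᶜ,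
      (((k : ℕ) : ℝ) - (((σ * Equiv.swap i j) k : ℕ) : ℝ)) ^ 2
      = ∑ k ∈ ({i, j} : Finset (Fin n))ᶜ,
      (((k : ℕ) : ℝ) - ((σ k : ℕ) : ℝ)) ^ 2 := by
    refine Finset.sum_congr rfl fun k hk => ?_
    simp only [Finset.mem_compl, Finset.mem_insert, Finset.mem_singleton, not_or] at hk
    rw [Equiv.Perm.mul_apply, Equiv.swap_apply_of_ne_of_ne hk.1 hk.2]
  rw [hcompl]
  refine add_lt_add_of_le_of_lt le_rfl ?_
  rw [Finset.sum_pair hij, Finset.sum_pair hij]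
  simp only [Equiv.Perm.mul_apply, Equiv.swap_apply_left, Equiv.swap_apply_right]
  nlinarith [hmis]
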